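/- Let H₁, H₂ ∈ (1/2, 1), a > 0, and set c_{a,h} = a^{−h/2} Γ(h/2). Then for every x ∈ ℝ, ∫_ℝ ( ∫₀¹ K_{H₁,H₂}(s,x,y) ds ) e^{a y} 𝟙{y ≤ 1} dy = ∫₀¹ ( c_{a,H₂} (s − x)₊^{H₁/2 − 1} + c_{a,H₁} (s − x)₊^{H₂/2 − 1} ) e^{a s} ds, and both sides are finite. -/

import Mathlib

open MeasureTheory

/-- `u₊^p`: equals `u ^ p` (real power) if `u > 0`, and `0` otherwise. -/
noncomputable def plusPow (u p : ℝ) : ℝ := if 0 < u then u ^ p else 0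

/-- The kernel `K_{H₁,H₂}(s,x,y)` of the generalized Rosenblatt process. -/
noncomputable def rosenblattK (H₁ H₂ s x y : ℝ) : ℝ :=
  plusPow (s - x) (H₁ / 2 - 1) * plusPow (s - y) (H₂ / 2 - 1) +
  plusPow (s - x) (H₂ / 2 - 1) * plusPow (s - y) (H₁ / 2 - 1)

/-- `c_{a,h} = a^{-h/2} Γ(h/2)`. -/
noncomputable def cahConst (a h : ℝ) : ℝ := a ^ (-(h / 2)) * Real.Gamma (h / 2)

lemma measurable_plusPow (q : ℝ) : Measurable (fun u : ℝ => plusPow u q) := by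
  unfold plusPow
  exact Measurable.ite (measurableSet_Ioi (a := (0:ℝ))) (by fun_prop) measurable_const

lemma plusPow_nonneg (u p : ℝ) : 0 ≤ plusPow u p := by
  unfold plusPow
  split
  · exact Real.rpow_nonneg (le_of_lt ‹_›) _
  · exact le_refl _

lemma key1D {a q : ℝ} (ha : 0 < a) (hq : -1 < q) (s : ℝ) :
    Integrable (fun y => plusPow (s - y) q * Real.exp (a * y)) volume ∧
    ∫ y, plusPow (s - y) q * Real.exp (a * y)
      = Real.exp (a * s) * (a ^ (-(q + 1)) * Real.Gamma (q + 1)) := by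
  set g : ℝ → ℝ := (Set.Ioi (0:ℝ)).indicator (fun v => v ^ q * Real.exp (-(a * v))) with hgdef
  have hg : Integrable g volume := by
    rw [hgdef, integrable_indicator_iff measurableSet_Ioi]
    have h := integrableOn_rpow_mul_exp_neg_mul_rpow (p := 1) hq zero_lt_one ha
    simpa [Real.rpow_one, neg_mul] using h
  have hfg : (fun y => plusPow (s - y) q * Real.exp (a * y))
      = fun y => Real.exp (a * s) * g (s - y) := by
    funext y
    by_cases h : 0 < s - y
    · rw [hgdef, Set.indicator_of_mem (Set.mem_Ioi.mpr h)]
      simp only [plusPow, if_pos h]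
      rw [show a * y = a * s + -(a * (s - y)) by ring, Real.exp_add]
      ring
    · rw [hgdef, Set.indicator_of_notMem (by simpa using h)]
      simp only [plusPow, if_neg h]
      ring
  constructor
  · rw [hfg]
    exact (hg.comp_sub_left s).const_mul _
  · rw [hfg, integral_const_mul, integral_sub_left_eq_self g volume s, hgdef,
      integral_indicator measurableSet_Ioi]
    have h2 := Real.integral_rpow_mul_exp_neg_mul_Ioi (a := q + 1) (r := a) (by linarith) ha
    rw [show q + 1 - 1 = q by ring] at h2
    rw [h2]
    congr 1
    rw [one_div, Real.inv_rpow ha.le, ← Real.rpow_neg ha.le]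

lemma plusPow_integrableOn {q : ℝ} (hq : -1 < q) (x : ℝ) :
    IntegrableOn (fun s => plusPow (s - x) q) (Set.Ioc (0:ℝ) 1) volume := by
  have hpp : (fun u : ℝ => plusPow u q) = (Set.Ioi (0:ℝ)).indicator (fun u => u ^ q) := by
    funext u
    by_cases h : 0 < u
    · rw [Set.indicator_of_mem (Set.mem_Ioi.mpr h)]; simp [plusPow, if_pos h]
    · rw [Set.indicator_of_notMem (by simpa using h)]; simp [plusPow, if_neg h]
  have hbase : IntegrableOn (fun u : ℝ => plusPow u q) (Set.Ioc (-x) (1 - x)) volume := by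
    rw [hpp, IntegrableOn, integrable_indicator_iff measurableSet_Ioi, IntegrableOn,
      Measure.restrict_restrict measurableSet_Ioi]
    exact ((intervalIntegral.intervalIntegrable_rpow' (a := 0) (b := 1 - x) hq).1).mono_set
      (fun u hu => ⟨hu.1, hu.2.2⟩)
  rw [← integrable_indicator_iff measurableSet_Ioc]
  have key : (Set.Ioc (0:ℝ) 1).indicator (fun s => plusPow (s - x) q)
      = fun s => (Set.Ioc (-x) (1 - x)).indicator (fun u => plusPow u q) (s - x) := by
    funext s
    by_cases h : s ∈ Set.Ioc (0:ℝ) 1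
    · rw [Set.indicator_of_mem h, Set.indicator_of_mem
        (Set.mem_Ioc.mpr ⟨by linarith [h.1], by linarith [h.2]⟩)]
    · rw [Set.indicator_of_notMem h, Set.indicator_of_notMem]
      intro hmem
      exact h ⟨by linarith [hmem.1], by linarith [hmem.2]⟩
  rw [key]
  exact ((integrable_indicator_iff measurableSet_Ioc).mpr hbase).comp_sub_right x

/-- The image of the test function `f_a(y) = e^{ay} 𝟙{y ≤ 1}` under the integral operator
with kernel `φ(x,y) = ∫₀¹ K_{H₁,H₂}(s,x,y) ds`, with finiteness of both sides. -/
theorem operator_on_test_function (H₁ H₂ : ℝ) (hH₁ : H₁ ∈ Set.Ioo (1/2 : ℝ) 1)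
    (hH₂ : H₂ ∈ Set.Ioo (1/2 : ℝ) 1) (a : ℝ) (ha : 0 < a) (x : ℝ) :
    Integrable (fun y : ℝ =>
      (∫ s in (0:ℝ)..1, rosenblattK H₁ H₂ s x y) * Real.exp (a * y) *
        (if y ≤ 1 then (1:ℝ) else 0)) ∧
    IntervalIntegrable (fun s : ℝ =>
      (cahConst a H₂ * plusPow (s - x) (H₁ / 2 - 1) +
       cahConst a H₁ * plusPow (s - x) (H₂ / 2 - 1)) * Real.exp (a * s))
      MeasureTheory.volume 0 1 ∧
    (∫ y : ℝ, (∫ s in (0:ℝ)..1, rosenblattK H₁ H₂ s x y) * Real.exp (a * y) *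
        (if y ≤ 1 then (1:ℝ) else 0))
      = ∫ s in (0:ℝ)..1,
          (cahConst a H₂ * plusPow (s - x) (H₁ / 2 - 1) +
           cahConst a H₁ * plusPow (s - x) (H₂ / 2 - 1)) * Real.exp (a * s) := by
  obtain ⟨h1l, h1r⟩ := hH₁
  obtain ⟨h2l, h2r⟩ := hH₂
  have hq₁ : (-1:ℝ) < H₁ / 2 - 1 := by linarith
  have hq₂ : (-1:ℝ) < H₂ / 2 - 1 := by linarith
  have hC₁ : a ^ (-(H₁ / 2 - 1 + 1)) * Real.Gamma (H₁ / 2 - 1 + 1) = cahConst a H₁ := by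
    rw [show H₁ / 2 - 1 + 1 = H₁ / 2 by ring, cahConst]
  have hC₂ : a ^ (-(H₂ / 2 - 1 + 1)) * Real.Gamma (H₂ / 2 - 1 + 1) = cahConst a H₂ := by
    rw [show H₂ / 2 - 1 + 1 = H₂ / 2 by ring, cahConst]
  -- integrability of the 1D pieces, with the indicator
  have hGind : ∀ (qq : ℝ), -1 < qq → ∀ s : ℝ,
      Integrable (fun y => plusPow (s - y) qq * Real.exp (a * y) *
        (if y ≤ 1 then (1:ℝ) else 0)) volume := by
    intro qq hqq s
    have heq : (fun y => plusPow (s - y) qq * Real.exp (a * y) * (if y ≤ 1 then (1:ℝ) else 0))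
        = (Set.Iic (1:ℝ)).indicator (fun y => plusPow (s - y) qq * Real.exp (a * y)) := by
      funext y
      by_cases h : y ≤ 1
      · rw [Set.indicator_of_mem (Set.mem_Iic.mpr h)]; simp [h]
      · rw [Set.indicator_of_notMem (by simpa using h)]; simp [h]
    rw [heq]
    exact ((key1D ha hqq s).1).indicator measurableSet_Iic
  have hGeq : ∀ (qq : ℝ), ∀ s : ℝ, s ≤ 1 →
      (fun y => plusPow (s - y) qq * Real.exp (a * y) * (if y ≤ 1 then (1:ℝ) else 0))
        = fun y => plusPow (s - y) qq * Real.exp (a * y) := by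
    intro qq s hs
    funext y
    by_cases h : y ≤ 1
    · simp [h]
    · have h0 : ¬ (0 < s - y) := by push_neg at h ⊢; linarith
      simp only [plusPow, if_neg h, if_neg h0, mul_zero, zero_mul]
  have hGint : ∀ (qq : ℝ), -1 < qq → ∀ s : ℝ, s ≤ 1 →
      (∫ y, plusPow (s - y) qq * Real.exp (a * y) * (if y ≤ 1 then (1:ℝ) else 0))
        = Real.exp (a * s) * (a ^ (-(qq + 1)) * Real.Gamma (qq + 1)) := by
    intro qq hqq s hs
    rw [hGeq qq s hs]
    exact (key1D ha hqq s).2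
  -- the two-variable function
  set F : ℝ → ℝ → ℝ := fun s y => rosenblattK H₁ H₂ s x y *
      (Real.exp (a * y) * (if y ≤ 1 then (1:ℝ) else 0)) with hF
  have hFsec : ∀ s : ℝ, F s = fun y =>
      plusPow (s - x) (H₁ / 2 - 1) *
        (plusPow (s - y) (H₂ / 2 - 1) * Real.exp (a * y) * (if y ≤ 1 then (1:ℝ) else 0))
      + plusPow (s - x) (H₂ / 2 - 1) *
        (plusPow (s - y) (H₁ / 2 - 1) * Real.exp (a * y) * (if y ≤ 1 then (1:ℝ) else 0)) := by
    intro s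
    funext y
    simp only [hF]
    unfold rosenblattK
    ring
  have hFsecInt : ∀ s : ℝ, Integrable (F s) volume := by
    intro s
    rw [hFsec s]
    exact ((hGind _ hq₂ s).const_mul _).add ((hGind _ hq₁ s).const_mul _)
  have hFint : ∀ s ∈ Set.Ioc (0:ℝ) 1, (∫ y, F s y) =
      (cahConst a H₂ * plusPow (s - x) (H₁ / 2 - 1) +
       cahConst a H₁ * plusPow (s - x) (H₂ / 2 - 1)) * Real.exp (a * s) := by
    intro s hs
    simp only [hFsec s]
    rw [integral_add ((hGind _ hq₂ s).const_mul _) ((hGind _ hq₁ s).const_mul _),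
      integral_const_mul, integral_const_mul, hGint _ hq₂ s hs.2, hGint _ hq₁ s hs.2, hC₁, hC₂]
    ring
  have hFnn : ∀ s y : ℝ, 0 ≤ F s y := by
    intro s y
    simp only [hF]
    unfold rosenblattK
    apply mul_nonneg
    · exact add_nonneg (mul_nonneg (plusPow_nonneg _ _) (plusPow_nonneg _ _))
        (mul_nonneg (plusPow_nonneg _ _) (plusPow_nonneg _ _))
    · apply mul_nonneg (Real.exp_nonneg _)
      split <;> norm_num
  have hmeasF : AEStronglyMeasurable (Function.uncurry F)
      ((volume.restrict (Set.Ioc (0:ℝ) 1)).prod volume) := by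
    apply Measurable.aestronglyMeasurable
    have m1 : Measurable fun z : ℝ × ℝ => plusPow (z.1 - x) (H₁ / 2 - 1) :=
      (measurable_plusPow _).comp (measurable_fst.sub measurable_const)
    have m2 : Measurable fun z : ℝ × ℝ => plusPow (z.1 - x) (H₂ / 2 - 1) :=
      (measurable_plusPow _).comp (measurable_fst.sub measurable_const)
    have m3 : Measurable fun z : ℝ × ℝ => plusPow (z.1 - z.2) (H₁ / 2 - 1) :=
      (measurable_plusPow _).comp (measurable_fst.sub measurable_snd)
    have m4 : Measurable fun z : ℝ × ℝ => plusPow (z.1 - z.2) (H₂ / 2 - 1) :=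
      (measurable_plusPow _).comp (measurable_fst.sub measurable_snd)
    have m5 : Measurable fun z : ℝ × ℝ => Real.exp (a * z.2) := by fun_prop
    have m6 : Measurable fun z : ℝ × ℝ => (if z.2 ≤ 1 then (1:ℝ) else 0) :=
      Measurable.ite (measurableSet_le measurable_snd measurable_const)
        measurable_const measurable_const
    exact (((m1.mul m4).add (m2.mul m3)).mul (m5.mul m6))
  -- integrability of the target on (0,1]
  have hcomb : Integrable (fun s => cahConst a H₂ * plusPow (s - x) (H₁ / 2 - 1)
      + cahConst a H₁ * plusPow (s - x) (H₂ / 2 - 1))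
      (volume.restrict (Set.Ioc (0:ℝ) 1)) :=
    ((plusPow_integrableOn hq₁ x).const_mul _).add ((plusPow_integrableOn hq₂ x).const_mul _)
  have hexp : Integrable (fun s => Real.exp (a * s) *
      (cahConst a H₂ * plusPow (s - x) (H₁ / 2 - 1)
        + cahConst a H₁ * plusPow (s - x) (H₂ / 2 - 1)))
      (volume.restrict (Set.Ioc (0:ℝ) 1)) := by
    apply hcomb.bdd_mul (c := Real.exp a)
    · exact (Real.continuous_exp.comp (continuous_const.mul continuous_id)).aestronglyMeasurable
    · filter_upwards [ae_restrict_mem measurableSet_Ioc] with s hs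
      rw [Real.norm_eq_abs, Real.abs_exp]
      exact Real.exp_le_exp.mpr (by nlinarith [hs.2])
  have hR : Integrable (fun s : ℝ =>
      (cahConst a H₂ * plusPow (s - x) (H₁ / 2 - 1) +
       cahConst a H₁ * plusPow (s - x) (H₂ / 2 - 1)) * Real.exp (a * s))
      (volume.restrict (Set.Ioc (0:ℝ) 1)) :=
    hexp.congr (Filter.Eventually.of_forall fun s => mul_comm _ _)
  -- product integrability
  have hnormint : Integrable (fun s => ∫ y, ‖Function.uncurry F (s, y)‖)
      (volume.restrict (Set.Ioc (0:ℝ) 1)) := by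
    apply hR.congr
    filter_upwards [ae_restrict_mem measurableSet_Ioc] with s hs
    rw [← hFint s hs]
    refine integral_congr_ae (Filter.Eventually.of_forall fun y => ?_)
    simp only [Function.uncurry_apply_pair]
    exact (Real.norm_of_nonneg (hFnn s y)).symm
  have hprod : Integrable (Function.uncurry F)
      ((volume.restrict (Set.Ioc (0:ℝ) 1)).prod volume) := by
    rw [integrable_prod_iff hmeasF]
    exact ⟨Filter.Eventually.of_forall fun s => hFsecInt s, hnormint⟩
  -- rewriting the LHS
  have hLHS : (fun y : ℝ => (∫ s in (0:ℝ)..1, rosenblattK H₁ H₂ s x y) * Real.exp (a * y) *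
      (if y ≤ 1 then (1:ℝ) else 0)) = fun y => ∫ s in Set.Ioc (0:ℝ) 1, F s y := by
    funext y
    rw [intervalIntegral.integral_of_le (by norm_num : (0:ℝ) ≤ 1), mul_assoc,
      ← integral_mul_const]
  refine ⟨?_, ?_, ?_⟩
  · rw [hLHS]
    have h := hprod.integral_prod_right
    simpa [Function.uncurry] using h
  · rw [intervalIntegrable_iff, Set.uIoc_of_le (by norm_num : (0:ℝ) ≤ 1)]
    exact hR
  · rw [hLHS,
      show (∫ y : ℝ, ∫ s in Set.Ioc (0:ℝ) 1, F s y) = ∫ s in Set.Ioc (0:ℝ) 1, ∫ y, F s y from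
        (integral_integral_swap hprod).symm,
      intervalIntegral.integral_of_le (by norm_num : (0:ℝ) ≤ 1)]
    exact setIntegral_congr_fun measurableSet_Ioc (fun s hs => hFint s hs)
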